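/- With the same setup, if r_t = h then the Hessian of c_v with respect to x_t also vanishes: Hess_{x_t} c_v = 0. Consequently c_v extends to a C² function of x_t across the hard-cutoff boundary, where for r_t > h the neighbor t is excluded from the sum. -/

import Mathlib

open Real

/-- The logistic sigmoid `S(x) = 1/(1 + e^{-x})`. -/
noncomputable def sigmoid : ℝ → ℝ := fun x => 1 / (1 + Real.exp (-x))

/-- The polynomial envelope `p(x) = 1 - ((n+1)(n+2)/2)xⁿ + n(n+2)xⁿ⁺¹ - (n(n+1)/2)xⁿ⁺²`. -/
noncomputable def polyEnvelope (n : ℕ) : ℝ → ℝ := fun x =>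
  1 - ((n + 1) * (n + 2) / 2) * x ^ n + (n * (n + 2)) * x ^ (n + 1)
    - (n * (n + 1) / 2) * x ^ (n + 2)

/-- The Gaussian weighting function (normal PDF with mean `μ` and std `σ`). -/
noncomputable def gaussWeight (μ σ : ℝ) : ℝ → ℝ := fun x =>
  (1 / (σ * Real.sqrt (2 * π))) * Real.exp (-(1 / 2) * ((x - μ) / σ) ^ 2)

variable {ι : Type*} [DecidableEq ι]

/-- Distance of neighbor `u` from the center atom `xv`, where the position of the
distinguished neighbor `t` is the variable `xt` and all other positions are given by `pos`. -/
noncomputable def nbrDist (d : ℕ) (t : ι) (pos : ι → EuclideanSpace ℝ (Fin d))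
    (xv : EuclideanSpace ℝ (Fin d)) (xt : EuclideanSpace ℝ (Fin d)) (u : ι) : ℝ :=
  if u = t then ‖xt - xv‖ else ‖pos u - xv‖

/-- The soft rank `R_u` of neighbor `u`, as a function of the position `xt` of neighbor `t`. -/
noncomputable def softRank (d : ℕ) (N : Finset ι) (t : ι) (pos : ι → EuclideanSpace ℝ (Fin d))
    (xv : EuclideanSpace ℝ (Fin d)) (α h : ℝ) (n : ℕ)
    (xt : EuclideanSpace ℝ (Fin d)) (u : ι) : ℝ :=
  ∑ s ∈ N.erase u, _root_.sigmoid (α * (nbrDist d t pos xv xt u - nbrDist d t pos xv xt s)) *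
    polyEnvelope n (nbrDist d t pos xv xt s / h)

/-- The dynamic cutoff `c_v`, as a function of the position `xt` of neighbor `t`. -/
noncomputable def dynCutoff (d : ℕ) (N : Finset ι) (t : ι) (pos : ι → EuclideanSpace ℝ (Fin d))
    (xv : EuclideanSpace ℝ (Fin d)) (α h ε μ σ : ℝ) (n : ℕ)
    (xt : EuclideanSpace ℝ (Fin d)) : ℝ :=
  (∑ u ∈ N, gaussWeight μ σ (softRank d N t pos xv α h n xt u) *
      polyEnvelope n (nbrDist d t pos xv xt u / h) * nbrDist d t pos xv xt u + h * ε) /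
  (∑ u ∈ N, gaussWeight μ σ (softRank d N t pos xv α h n xt u) *
      polyEnvelope n (nbrDist d t pos xv xt u / h) + ε)


open Filter

/-- `f` has two derivatives `f₁, f₂` near `x₀`, with `f₂` continuous near `x₀`. -/
def HasD2 (f f₁ f₂ : ℝ → ℝ) (x₀ : ℝ) : Prop :=
  (∀ᶠ x in nhds x₀, HasDerivAt f (f₁ x) x) ∧
  (∀ᶠ x in nhds x₀, HasDerivAt f₁ (f₂ x) x) ∧
  (∀ᶠ x in nhds x₀, ContinuousAt f₂ x)

/-- `f` is C² near `x₀` with value `a` and vanishing first and second derivative at `x₀`. -/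
def Flat2 (f : ℝ → ℝ) (x₀ a : ℝ) : Prop :=
  ∃ f₁ f₂ : ℝ → ℝ, HasD2 f f₁ f₂ x₀ ∧ f x₀ = a ∧ f₁ x₀ = 0 ∧ f₂ x₀ = 0

lemma ContDiff.hasD2 {f : ℝ → ℝ} (hf : ContDiff ℝ (⊤:ℕ∞) f) (x₀ : ℝ) :
    HasD2 f (deriv f) (deriv (deriv f)) x₀ := by
  have h1 : Differentiable ℝ f := hf.differentiable (by simp)
  have hd : ContDiff ℝ (⊤:ℕ∞) (deriv f) := (contDiff_infty_iff_deriv.mp hf).2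
  have h2 : Differentiable ℝ (deriv f) := hd.differentiable (by simp)
  have h3 : Continuous (deriv (deriv f)) := ((contDiff_infty_iff_deriv.mp hd).2).continuous
  exact ⟨Eventually.of_forall fun x => (h1 x).hasDerivAt,
    Eventually.of_forall fun x => (h2 x).hasDerivAt,
    Eventually.of_forall fun x => h3.continuousAt⟩

lemma HasD2.contDiffAt {f f₁ f₂ : ℝ → ℝ} {x₀ : ℝ} (hf : HasD2 f f₁ f₂ x₀) :
    ContDiffAt ℝ 2 f x₀ := by
  obtain ⟨h1, h2, h3⟩ := hf
  have L : ℝ →L[ℝ] (ℝ →L[ℝ] ℝ) := ContinuousLinearMap.smulRightL ℝ ℝ ℝ (1 : ℝ →L[ℝ] ℝ)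
  have h2' : ContDiffAt ℝ 1 f₁ x₀ := by
    rw [show (1 : WithTop ℕ∞) = ((0:ℕ) : WithTop ℕ∞) + 1 by norm_num, contDiffAt_succ_iff_hasFDerivAt]
    refine ⟨fun x => ContinuousLinearMap.smulRight (1 : ℝ →L[ℝ] ℝ) (f₂ x), ?_, ?_⟩
    · obtain ⟨u, hu, hmem⟩ := h2.exists_mem
      exact ⟨u, hu, fun x hx => hasDerivAt_iff_hasFDerivAt.mp (hmem x hx)⟩
    · rw [show ((0:ℕ):WithTop ℕ∞) = 0 by norm_num, contDiffAt_zero]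
      obtain ⟨u, hu, hmem⟩ := h3.exists_mem
      refine ⟨u, hu, ?_⟩
      have : Continuous fun y : ℝ => ContinuousLinearMap.smulRight (1 : ℝ →L[ℝ] ℝ) y :=
        (ContinuousLinearMap.smulRightL ℝ ℝ ℝ (1 : ℝ →L[ℝ] ℝ)).continuous
      exact this.comp_continuousOn (fun x hx => (hmem x hx).continuousWithinAt)
  rw [show (2 : WithTop ℕ∞) = ((1:ℕ) : WithTop ℕ∞) + 1 by norm_num, contDiffAt_succ_iff_hasFDerivAt]
  refine ⟨fun x => ContinuousLinearMap.smulRight (1 : ℝ →L[ℝ] ℝ) (f₁ x), ?_, ?_⟩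
  · obtain ⟨u, hu, hmem⟩ := h1.exists_mem
    exact ⟨u, hu, fun x hx => hasDerivAt_iff_hasFDerivAt.mp (hmem x hx)⟩
  · have : (fun x => ContinuousLinearMap.smulRight (1 : ℝ →L[ℝ] ℝ) (f₁ x)) =
        (ContinuousLinearMap.smulRightL ℝ ℝ ℝ (1 : ℝ →L[ℝ] ℝ)) ∘ f₁ := rfl
    rw [this]
    exact ((ContinuousLinearMap.smulRightL ℝ ℝ ℝ (1 : ℝ →L[ℝ] ℝ)).contDiff.comp_contDiffAt x₀
      (by exact_mod_cast h2'))

lemma Flat2.const (x₀ a : ℝ) : Flat2 (fun _ => a) x₀ a :=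
  ⟨fun _ => 0, fun _ => 0,
    ⟨Eventually.of_forall fun x => hasDerivAt_const x a,
     Eventually.of_forall fun x => hasDerivAt_const x 0,
     Eventually.of_forall fun _ => continuousAt_const⟩, rfl, rfl, rfl⟩

lemma Flat2.add {f g : ℝ → ℝ} {x₀ a b : ℝ} (hf : Flat2 f x₀ a) (hg : Flat2 g x₀ b) :
    Flat2 (fun x => f x + g x) x₀ (a + b) := by
  obtain ⟨f₁, f₂, ⟨hf1, hf2, hf3⟩, hfa, hf10, hf20⟩ := hf
  obtain ⟨g₁, g₂, ⟨hg1, hg2, hg3⟩, hgb, hg10, hg20⟩ := hg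
  refine ⟨fun x => f₁ x + g₁ x, fun x => f₂ x + g₂ x,
    ⟨(hf1.and hg1).mono fun x hx => hx.1.add hx.2,
     (hf2.and hg2).mono fun x hx => hx.1.add hx.2,
     (hf3.and hg3).mono fun x hx => hx.1.add hx.2⟩, ?_, ?_, ?_⟩ <;>
  simp [hfa, hgb, hf10, hg10, hf20, hg20]

lemma Flat2.mul {f g : ℝ → ℝ} {x₀ a b : ℝ} (hf : Flat2 f x₀ a) (hg : Flat2 g x₀ b) :
    Flat2 (fun x => f x * g x) x₀ (a * b) := by
  obtain ⟨f₁, f₂, ⟨hf1, hf2, hf3⟩, hfa, hf10, hf20⟩ := hf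
  obtain ⟨g₁, g₂, ⟨hg1, hg2, hg3⟩, hgb, hg10, hg20⟩ := hg
  refine ⟨fun x => f₁ x * g x + f x * g₁ x,
    fun x => f₂ x * g x + 2 * (f₁ x * g₁ x) + f x * g₂ x,
    ⟨(hf1.and hg1).mono fun x hx => hx.1.mul hx.2, ?_, ?_⟩, ?_, ?_, ?_⟩
  · filter_upwards [hf1, hf2, hg1, hg2] with x h1 h2 h3 h4
    have := (h2.mul h3).add (h1.mul h4)
    exact this.congr_deriv (by ring)
  · filter_upwards [hf1.and (hf2.and hf3), hg1.and (hg2.and hg3)] with x hx hy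
    exact ((hx.2.2.mul hy.1.continuousAt).add
      (continuousAt_const.mul (hx.2.1.continuousAt.mul hy.2.1.continuousAt))).add
      (hx.1.continuousAt.mul hy.2.2)
  · simp [hfa, hgb]
  · simp [hf10, hg10, hfa, hgb]
  · simp [hf20, hg20, hf10, hg10, hfa, hgb]

lemma Flat2.sum {κ : Type*} {s : Finset κ} {F : κ → ℝ → ℝ} {A : κ → ℝ} {x₀ : ℝ}
    (h : ∀ i ∈ s, Flat2 (F i) x₀ (A i)) :
    Flat2 (fun x => ∑ i ∈ s, F i x) x₀ (∑ i ∈ s, A i) := by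
  classical
  induction s using Finset.cons_induction_on with
  | empty => simpa using Flat2.const x₀ 0
  | cons a s ha ih =>
    simp only [Finset.sum_cons]
    exact (h _ (Finset.mem_cons_self _ _)).add
      (ih fun i hi => h i (Finset.mem_cons_of_mem hi))

/-- product of an everywhere-smooth function with a function flat of value `0`. -/
lemma ContDiff.mul_flat {f g : ℝ → ℝ} {x₀ : ℝ} (hf : ContDiff ℝ (⊤:ℕ∞) f)
    (hg : Flat2 g x₀ 0) : Flat2 (fun x => f x * g x) x₀ 0 := by
  obtain ⟨g₁, g₂, ⟨hg1, hg2, hg3⟩, hgb, hg10, hg20⟩ := hg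
  obtain ⟨hd1, hd2, hd3⟩ := hf.hasD2 x₀
  refine ⟨fun x => deriv f x * g x + f x * g₁ x,
    fun x => deriv (deriv f) x * g x + 2 * (deriv f x * g₁ x) + f x * g₂ x,
    ⟨?_, ?_, ?_⟩, ?_, ?_, ?_⟩
  · filter_upwards [hd1, hg1] with x h1 h2 using h1.mul h2
  · filter_upwards [hd1, hd2, hg1, hg2] with x h1 h2 h3 h4
    have := (h2.mul h3).add (h1.mul h4)
    exact this.congr_deriv (by ring)
  · filter_upwards [hd1.and (hd2.and hd3), hg1.and (hg2.and hg3)] with x hx hy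
    exact ((hx.2.2.mul hy.1.continuousAt).add
      (continuousAt_const.mul (hx.2.1.continuousAt.mul hy.2.1.continuousAt))).add
      (hx.1.continuousAt.mul hy.2.2)
  · simp [hgb]
  · simp [hgb, hg10]
  · simp [hgb, hg10, hg20]

lemma Flat2.comp {f : ℝ → ℝ} {x₀ a : ℝ} {g : ℝ → ℝ} {U : Set ℝ}
    (hU : IsOpen U) (hg : ContDiffOn ℝ (⊤:ℕ∞) g U) (haU : a ∈ U)
    (hf : Flat2 f x₀ a) : Flat2 (fun x => g (f x)) x₀ (g a) := by
  obtain ⟨f₁, f₂, ⟨hf1, hf2, hf3⟩, hfa, hf10, hf20⟩ := hf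
  have htop : (⊤:ℕ∞) + 1 ≤ ((⊤:ℕ∞) : WithTop ℕ∞) := by
    exact_mod_cast le_top
  have hgd : ContDiffOn ℝ (⊤:ℕ∞) (deriv g) U := hg.deriv_of_isOpen hU htop
  have hgdd : ContDiffOn ℝ (⊤:ℕ∞) (deriv (deriv g)) U := hgd.deriv_of_isOpen hU htop
  have hD : ∀ y ∈ U, HasDerivAt g (deriv g y) y := fun y hy =>
    ((hg.differentiableOn (by simp)).differentiableAt
      (hU.mem_nhds hy)).hasDerivAt
  have hD2 : ∀ y ∈ U, HasDerivAt (deriv g) (deriv (deriv g) y) y := fun y hy =>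
    ((hgd.differentiableOn (by simp)).differentiableAt
      (hU.mem_nhds hy)).hasDerivAt
  have hfc : ContinuousAt f x₀ := hf1.self_of_nhds.continuousAt
  have hmemU : ∀ᶠ x in nhds x₀, f x ∈ U := by
    have : U ∈ nhds (f x₀) := hU.mem_nhds (by rwa [hfa])
    exact hfc this
  refine ⟨fun x => deriv g (f x) * f₁ x,
    fun x => deriv (deriv g) (f x) * f₁ x * f₁ x + deriv g (f x) * f₂ x,
    ⟨?_, ?_, ?_⟩, by simp only [hfa], by simp [hf10], by simp [hf10, hf20]⟩
  · filter_upwards [hf1, hmemU] with x h1 h2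
    exact (hD _ h2).comp x h1
  · filter_upwards [hf1, hf2, hmemU] with x h1 h2 h3
    have hcomp : HasDerivAt (fun y => deriv g (f y)) (deriv (deriv g) (f x) * f₁ x) x := by
      exact (hD2 _ h3).comp x h1
    exact hcomp.mul h2
  · filter_upwards [hf1, hf2, hf3, hmemU] with x h1 h2 h3 h4
    have hfcx : ContinuousAt f x := h1.continuousAt
    have c1 : ContinuousAt (fun y => deriv (deriv g) (f y)) x :=
      ((hgdd.continuousOn.continuousAt (hU.mem_nhds h4)).comp hfcx)
    have c2 : ContinuousAt (fun y => deriv g (f y)) x :=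
      ((hgd.continuousOn.continuousAt (hU.mem_nhds h4)).comp hfcx)
    exact ((c1.mul h2.continuousAt).mul h2.continuousAt).add (c2.mul h3)

lemma Flat2.inv {f : ℝ → ℝ} {x₀ a : ℝ} (hf : Flat2 f x₀ a) (ha : a ≠ 0) :
    Flat2 (fun x => (f x)⁻¹) x₀ a⁻¹ :=
  Flat2.comp (U := {(0:ℝ)}ᶜ) isOpen_compl_singleton (contDiffOn_inv ℝ) ha hf

lemma Flat2.div {f g : ℝ → ℝ} {x₀ a b : ℝ} (hf : Flat2 f x₀ a) (hg : Flat2 g x₀ b)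
    (hb : b ≠ 0) : Flat2 (fun x => f x / g x) x₀ (a / b) := by
  have := hf.mul (hg.inv hb)
  simpa [div_eq_mul_inv] using this

/-! ### Facts about the polynomial envelope -/

/-- first derivative of the envelope -/
noncomputable def polyEnvelope₁ (n : ℕ) : ℝ → ℝ := fun x =>
  0 - ((n + 1) * (n + 2) / 2) * ((n:ℝ) * x ^ (n-1)) + (n * (n + 2)) * (((n:ℝ)+1) * x ^ n)
    - (n * (n + 1) / 2) * (((n:ℝ)+2) * x ^ (n+1))

/-- second derivative of the envelope -/
noncomputable def polyEnvelope₂ (n : ℕ) : ℝ → ℝ := fun x =>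
  0 - ((n + 1) * (n + 2) / 2) * ((n:ℝ) * ((↑(n-1)) * x ^ (n-1-1)))
    + (n * (n + 2)) * (((n:ℝ)+1) * ((n:ℝ) * x ^ (n-1)))
    - (n * (n + 1) / 2) * (((n:ℝ)+2) * ((↑(n+1)) * x ^ n))

lemma polyEnvelope_hasDeriv (n : ℕ) (x : ℝ) :
    HasDerivAt (polyEnvelope n) (polyEnvelope₁ n x) x := by
  unfold polyEnvelope polyEnvelope₁
  exact (((hasDerivAt_const x (1:ℝ)).sub ((hasDerivAt_pow n x).const_mul _)).add
    ((hasDerivAt_pow (n+1) x).const_mul _)).sub ((hasDerivAt_pow (n+2) x).const_mul _)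
      |>.congr_deriv (by push_cast; ring)

lemma polyEnvelope₁_hasDeriv (n : ℕ) (x : ℝ) :
    HasDerivAt (polyEnvelope₁ n) (polyEnvelope₂ n x) x := by
  unfold polyEnvelope₁ polyEnvelope₂
  exact (((hasDerivAt_const x (0:ℝ)).sub (((hasDerivAt_pow (n-1) x).const_mul
    ((n:ℝ))).const_mul _)).add ((((hasDerivAt_pow n x).const_mul ((n:ℝ)+1)).const_mul _))).sub
    ((((hasDerivAt_pow (n+1) x).const_mul ((n:ℝ)+2)).const_mul _))
      |>.congr_deriv (by push_cast; ring)

lemma polyEnvelope_one (n : ℕ) : polyEnvelope n 1 = 0 := by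
  unfold polyEnvelope; push_cast; ring

lemma polyEnvelope₁_one (n : ℕ) : polyEnvelope₁ n 1 = 0 := by
  unfold polyEnvelope₁; push_cast; ring

lemma polyEnvelope₂_one (n : ℕ) (hn : 3 ≤ n) : polyEnvelope₂ n 1 = 0 := by
  unfold polyEnvelope₂
  rw [Nat.cast_sub (by omega)]
  push_cast; ring

lemma polyEnvelope_contDiff (n : ℕ) : ContDiff ℝ (⊤:ℕ∞) (polyEnvelope n) := by
  unfold polyEnvelope; fun_prop

lemma polyEnvelope₂_continuous (n : ℕ) : Continuous (polyEnvelope₂ n) := by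
  unfold polyEnvelope₂; fun_prop

lemma polyEnvelope₁_nonpos (n : ℕ) (hn : 3 ≤ n) {x : ℝ} (hx : 0 ≤ x) :
    polyEnvelope₁ n x ≤ 0 := by
  obtain ⟨m, rfl⟩ : ∃ m, n = m + 1 := ⟨n - 1, by omega⟩
  have key : polyEnvelope₁ (m+1) x
      = -((m+1) * (m+2) * (m+3) / 2) * x ^ m * (1 - x)^2 := by
    unfold polyEnvelope₁
    simp only [Nat.add_sub_cancel]
    push_cast
    ring
  rw [key]
  have h1 : (0:ℝ) ≤ ((m:ℝ)+1) * ((m:ℝ)+2) * ((m:ℝ)+3) / 2 := by positivity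
  have h2 : (0:ℝ) ≤ x ^ m := pow_nonneg hx m
  have h3 : (0:ℝ) ≤ (1 - x)^2 := sq_nonneg _
  nlinarith [mul_nonneg (mul_nonneg h1 h2) h3]

lemma polyEnvelope_nonneg (n : ℕ) (hn : 3 ≤ n) {x : ℝ} (h0 : 0 ≤ x) (h1 : x ≤ 1) :
    0 ≤ polyEnvelope n x := by
  have hanti : AntitoneOn (polyEnvelope n) (Set.Icc 0 1) := by
    apply antitoneOn_of_deriv_nonpos (convex_Icc 0 1)
      ((polyEnvelope_contDiff n).continuous.continuousOn)
    · intro y hy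
      exact ((polyEnvelope_hasDeriv n y).differentiableAt).differentiableWithinAt
    · intro y hy
      rw [interior_Icc] at hy
      rw [(polyEnvelope_hasDeriv n y).deriv]
      exact polyEnvelope₁_nonpos n hn hy.1.le
  have := hanti (Set.mem_Icc.mpr ⟨h0, h1⟩) (Set.mem_Icc.mpr ⟨le_refl 0 |>.trans zero_le_one, le_refl 1⟩) h1
  rwa [polyEnvelope_one] at this

lemma sigmoid_contDiff : ContDiff ℝ (⊤:ℕ∞) _root_.sigmoid := by
  unfold _root_.sigmoid
  apply contDiff_const.div
  · fun_prop
  · intro x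
    positivity

lemma gaussWeight_contDiff (μ σ : ℝ) : ContDiff ℝ (⊤:ℕ∞) (gaussWeight μ σ) := by
  unfold gaussWeight
  have hinner : ContDiff ℝ (⊤:ℕ∞) fun x : ℝ => -(1/2) * ((x - μ) / σ) ^ 2 := by
    simp only [div_eq_mul_inv]; fun_prop
  exact contDiff_const.mul (Real.contDiff_exp.comp hinner)

lemma gaussWeight_pos (μ : ℝ) {σ : ℝ} (hσ : 0 < σ) (x : ℝ) : 0 < gaussWeight μ σ x := by
  unfold gaussWeight
  have : (0:ℝ) < Real.sqrt (2 * π) := Real.sqrt_pos.mpr (by positivity)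
  positivity

/-- The rescaled envelope `q(s) = p(s/h)` is flat at `s = h`. -/
lemma flat2_polyEnvelope_div {n : ℕ} (hn : 3 ≤ n) {h : ℝ} (hh : 0 < h) :
    Flat2 (fun s => polyEnvelope n (s / h)) h 0 := by
  have hdiv : ∀ s : ℝ, HasDerivAt (fun x : ℝ => x / h) (1 / h) s := fun s =>
    (hasDerivAt_id s).div_const h
  have hone : h / h = 1 := div_self hh.ne'
  refine ⟨fun s => polyEnvelope₁ n (s / h) * (1 / h),
    fun s => polyEnvelope₂ n (s / h) * (1 / h) * (1 / h), ⟨?_, ?_, ?_⟩, ?_, ?_, ?_⟩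
  · refine Eventually.of_forall fun s => ?_
    exact (polyEnvelope_hasDeriv n (s / h)).comp s (hdiv s)
  · refine Eventually.of_forall fun s => ?_
    have := ((polyEnvelope₁_hasDeriv n (s / h)).comp s (hdiv s)).mul_const (1 / h)
    simpa [Function.comp] using this
  · refine Eventually.of_forall fun s => ?_
    exact (((polyEnvelope₂_continuous n).comp (by fun_prop : Continuous fun x : ℝ => x / h)).continuousAt).mul
      continuousAt_const |>.mul continuousAt_const
  · simp [hone, polyEnvelope_one]
  · simp [hone, polyEnvelope₁_one]
  · simp [hone, polyEnvelope₂_one n hn]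

/-! ### Gluing a flat function with a constant -/

lemma glue_hasDeriv {f f' : ℝ → ℝ} {b k : ℝ}
    (hev : ∀ᶠ y in nhds b, HasDerivAt f (f' y) y) (hf'b : f' b = 0) (hk : f b = k) :
    ∀ᶠ y in nhds b, HasDerivAt (fun z => if z ≤ b then f z else k)
      (if y ≤ b then f' y else 0) y := by
  filter_upwards [hev] with y hy
  rcases lt_trichotomy y b with hlt | heq | hgt
  · rw [if_pos hlt.le]
    apply hy.congr_of_eventuallyEq
    filter_upwards [Iio_mem_nhds hlt] with z hz
    rw [if_pos (le_of_lt hz)]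
  · rw [heq] at hy ⊢
    rw [if_pos le_rfl, hf'b]
    have hleft : HasDerivWithinAt (fun z => if z ≤ b then f z else k) 0 (Set.Iic b) b := by
      have h0 := hy.hasDerivWithinAt (s := Set.Iic b)
      rw [hf'b] at h0
      exact h0.congr (fun z hz => if_pos hz) (if_pos le_rfl)
    have hright : HasDerivWithinAt (fun z => if z ≤ b then f z else k) 0 (Set.Ici b) b := by
      have h0 : HasDerivWithinAt (fun _ : ℝ => k) 0 (Set.Ici b) b :=
        (hasDerivAt_const b k).hasDerivWithinAt
      refine h0.congr (fun z hz => ?_) (by rw [if_pos le_rfl, hk])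
      rcases eq_or_lt_of_le (Set.mem_Ici.mp hz) with rfl | hzz
      · rw [if_pos le_rfl, hk]
      · rw [if_neg (not_le.mpr hzz)]
    have h1 := hleft.union hright
    rw [Set.Iic_union_Ici] at h1
    exact hasDerivWithinAt_univ.mp h1
  · rw [if_neg (not_le.mpr hgt)]
    apply (hasDerivAt_const y k).congr_of_eventuallyEq
    filter_upwards [Ioi_mem_nhds hgt] with z hz
    rw [if_neg (not_le.mpr hz)]

lemma glue_continuousAt {f : ℝ → ℝ} {b : ℝ}
    (hev : ∀ᶠ y in nhds b, ContinuousAt f y) (hfb : f b = 0) :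
    ∀ᶠ y in nhds b, ContinuousAt (fun z => if z ≤ b then f z else 0) y := by
  filter_upwards [hev] with y hy
  rcases lt_trichotomy y b with hlt | heq | hgt
  · apply hy.congr
    filter_upwards [Iio_mem_nhds hlt] with z hz
    rw [if_pos (le_of_lt hz)]
  · rw [heq] at hy ⊢
    have habs : Filter.Tendsto (fun z => |f z|) (nhds b) (nhds 0) := by
      have := hy.tendsto
      rw [hfb] at this
      simpa using this.abs
    have hup : ∀ z : ℝ, (if z ≤ b then f z else 0) ≤ |f z| := by
      intro z
      by_cases hz : z ≤ b
      · rw [if_pos hz]; exact le_abs_self _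
      · rw [if_neg hz]; exact abs_nonneg _
    have hlo : ∀ z : ℝ, -|f z| ≤ (if z ≤ b then f z else 0) := by
      intro z
      by_cases hz : z ≤ b
      · rw [if_pos hz]; exact neg_abs_le _
      · rw [if_neg hz]; simpa using abs_nonneg (f z)
    have htend : Filter.Tendsto (fun z => if z ≤ b then f z else 0) (nhds b) (nhds 0) := by
      refine tendsto_of_tendsto_of_tendsto_of_le_of_le ?_ habs (fun z => hlo z) (fun z => hup z)
      simpa using habs.neg
    show Filter.Tendsto (fun z => if z ≤ b then f z else 0) (nhds b)
      (nhds (if b ≤ b then f b else 0))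
    rw [if_pos le_rfl, hfb]
    exact htend
  · apply continuousAt_const.congr
    filter_upwards [Ioi_mem_nhds hgt] with z hz
    rw [if_neg (not_le.mpr hz)]

lemma glue_contDiffAt {φ : ℝ → ℝ} {b c : ℝ} (hflat : Flat2 φ b c) {s : ℝ}
    (hsm : s < b → ContDiffAt ℝ 2 φ s) :
    ContDiffAt ℝ 2 (fun y => if y ≤ b then φ y else c) s := by
  rcases lt_trichotomy s b with hlt | heq | hgt
  · apply (hsm hlt).congr_of_eventuallyEq
    filter_upwards [Iio_mem_nhds hlt] with y hy
    rw [if_pos (le_of_lt hy)]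
  · subst heq
    obtain ⟨φ₁, φ₂, ⟨h1, h2, h3⟩, hva, h10, h20⟩ := hflat
    have e1 := glue_hasDeriv h1 h10 hva
    have e2 := glue_hasDeriv h2 h20 h10
    have e3 := glue_continuousAt h3 h20
    exact HasD2.contDiffAt (f₁ := fun y => if y ≤ s then φ₁ y else 0)
      (f₂ := fun y => if y ≤ s then φ₂ y else 0) ⟨e1, e2, e3⟩
  · apply contDiffAt_const.congr_of_eventuallyEq
    filter_upwards [Ioi_mem_nhds hgt] with y hy
    rw [if_neg (not_le.mpr hy)]

/-! ### The cutoff as a function of the single radius `s = ‖xt - xv‖` -/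

noncomputable def auxNd (d : ℕ) (t : ι) (pos : ι → EuclideanSpace ℝ (Fin d))
    (xv : EuclideanSpace ℝ (Fin d)) (s : ℝ) (u : ι) : ℝ :=
  if u = t then s else ‖pos u - xv‖

noncomputable def auxSR (d : ℕ) (N : Finset ι) (t : ι) (pos : ι → EuclideanSpace ℝ (Fin d))
    (xv : EuclideanSpace ℝ (Fin d)) (α h : ℝ) (n : ℕ) (s : ℝ) (u : ι) : ℝ :=
  ∑ s' ∈ N.erase u, _root_.sigmoid (α * (auxNd d t pos xv s u - auxNd d t pos xv s s')) *
    polyEnvelope n (auxNd d t pos xv s s' / h)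

noncomputable def auxNum (d : ℕ) (N : Finset ι) (t : ι) (pos : ι → EuclideanSpace ℝ (Fin d))
    (xv : EuclideanSpace ℝ (Fin d)) (α h ε μ σ : ℝ) (n : ℕ) (s : ℝ) : ℝ :=
  ∑ u ∈ N, gaussWeight μ σ (auxSR d N t pos xv α h n s u) *
      polyEnvelope n (auxNd d t pos xv s u / h) * auxNd d t pos xv s u + h * ε

noncomputable def auxDen (d : ℕ) (N : Finset ι) (t : ι) (pos : ι → EuclideanSpace ℝ (Fin d))
    (xv : EuclideanSpace ℝ (Fin d)) (α h ε μ σ : ℝ) (n : ℕ) (s : ℝ) : ℝ :=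
  ∑ u ∈ N, gaussWeight μ σ (auxSR d N t pos xv α h n s u) *
      polyEnvelope n (auxNd d t pos xv s u / h) + ε

noncomputable def auxPhi (d : ℕ) (N : Finset ι) (t : ι) (pos : ι → EuclideanSpace ℝ (Fin d))
    (xv : EuclideanSpace ℝ (Fin d)) (α h ε μ σ : ℝ) (n : ℕ) (s : ℝ) : ℝ :=
  auxNum d N t pos xv α h ε μ σ n s / auxDen d N t pos xv α h ε μ σ n s

lemma dynCutoff_eq_aux (d : ℕ) (N : Finset ι) (t : ι) (pos : ι → EuclideanSpace ℝ (Fin d))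
    (xv : EuclideanSpace ℝ (Fin d)) (α h ε μ σ : ℝ) (n : ℕ) (xt : EuclideanSpace ℝ (Fin d)) :
    dynCutoff d N t pos xv α h ε μ σ n xt = auxPhi d N t pos xv α h ε μ σ n ‖xt - xv‖ := rfl

/-- the soft rank of `u ≠ t` with the `t` term removed, a constant. -/
noncomputable def auxA (d : ℕ) (N : Finset ι) (t : ι) (pos : ι → EuclideanSpace ℝ (Fin d))
    (xv : EuclideanSpace ℝ (Fin d)) (α h : ℝ) (n : ℕ) (u : ι) : ℝ :=
  ∑ s' ∈ (N.erase u).erase t, _root_.sigmoid (α * (‖pos u - xv‖ - ‖pos s' - xv‖)) *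
    polyEnvelope n (‖pos s' - xv‖ / h)

noncomputable def auxNumC (d : ℕ) (N : Finset ι) (t : ι) (pos : ι → EuclideanSpace ℝ (Fin d))
    (xv : EuclideanSpace ℝ (Fin d)) (α h ε μ σ : ℝ) (n : ℕ) : ℝ :=
  ∑ u ∈ N.erase t, gaussWeight μ σ (auxA d N t pos xv α h n u) *
      polyEnvelope n (‖pos u - xv‖ / h) * ‖pos u - xv‖ + h * ε

noncomputable def auxDenC (d : ℕ) (N : Finset ι) (t : ι) (pos : ι → EuclideanSpace ℝ (Fin d))
    (xv : EuclideanSpace ℝ (Fin d)) (α h ε μ σ : ℝ) (n : ℕ) : ℝ :=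
  ∑ u ∈ N.erase t, gaussWeight μ σ (auxA d N t pos xv α h n u) *
      polyEnvelope n (‖pos u - xv‖ / h) + ε

section auxLemmas

variable (d : ℕ) (N : Finset ι) (t : ι) (pos : ι → EuclideanSpace ℝ (Fin d))
  (xv : EuclideanSpace ℝ (Fin d)) (α h ε μ σ : ℝ) (n : ℕ)

lemma auxNd_contDiff (u : ι) : ContDiff ℝ (⊤:ℕ∞) (fun s => auxNd d t pos xv s u) := by
  unfold auxNd
  by_cases hu : u = t
  · have hid : (fun s : ℝ => if u = t then s else ‖pos u - xv‖) = id :=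
      funext fun s => by simp [hu]
    rw [hid]; exact contDiff_id
  · simpa [hu] using contDiff_const (c := ‖pos u - xv‖) (𝕜 := ℝ) (E := ℝ)

lemma auxSR_contDiff (u : ι) : ContDiff ℝ (⊤:ℕ∞) (fun s => auxSR d N t pos xv α h n s u) := by
  unfold auxSR
  apply ContDiff.sum
  intro s' _
  exact (sigmoid_contDiff.comp (contDiff_const.mul ((auxNd_contDiff d t pos xv u).sub
    (auxNd_contDiff d t pos xv s')))).mul
    ((polyEnvelope_contDiff n).comp ((auxNd_contDiff d t pos xv s').div_const h))

lemma auxNum_contDiff : ContDiff ℝ (⊤:ℕ∞) (auxNum d N t pos xv α h ε μ σ n) := by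
  unfold auxNum
  apply ContDiff.add ?_ contDiff_const
  apply ContDiff.sum
  intro u _
  exact (((gaussWeight_contDiff μ σ).comp (auxSR_contDiff d N t pos xv α h n u)).mul
    ((polyEnvelope_contDiff n).comp ((auxNd_contDiff d t pos xv u).div_const h))).mul
    (auxNd_contDiff d t pos xv u)

lemma auxDen_contDiff : ContDiff ℝ (⊤:ℕ∞) (auxDen d N t pos xv α h ε μ σ n) := by
  unfold auxDen
  apply ContDiff.add ?_ contDiff_const
  apply ContDiff.sum
  intro u _
  exact ((gaussWeight_contDiff μ σ).comp (auxSR_contDiff d N t pos xv α h n u)).mul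
    ((polyEnvelope_contDiff n).comp ((auxNd_contDiff d t pos xv u).div_const h))

lemma auxDen_ge (hn : 3 ≤ n) (hh : 0 < h) (hσ : 0 < σ) (hε : 0 < ε)
    (hpos : ∀ u ∈ N, u ≠ t → ‖pos u - xv‖ ∈ Set.Icc (0 : ℝ) h)
    {s : ℝ} (hs0 : 0 ≤ s) (hsh : s ≤ h) : ε ≤ auxDen d N t pos xv α h ε μ σ n s := by
  unfold auxDen
  refine le_add_of_nonneg_left (Finset.sum_nonneg fun u hu => ?_)
  apply mul_nonneg (gaussWeight_pos μ hσ _).le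
  apply polyEnvelope_nonneg n hn
  · unfold auxNd
    by_cases hut : u = t
    · rw [if_pos hut]; exact div_nonneg hs0 hh.le
    · rw [if_neg hut]; exact div_nonneg (hpos u hu hut).1 hh.le
  · unfold auxNd
    by_cases hut : u = t
    · rw [if_pos hut]; exact (div_le_one hh).mpr hsh
    · rw [if_neg hut]; exact (div_le_one hh).mpr (hpos u hu hut).2

lemma auxDenC_ge (hn : 3 ≤ n) (hh : 0 < h) (hσ : 0 < σ) (hε : 0 < ε)
    (hpos : ∀ u ∈ N, u ≠ t → ‖pos u - xv‖ ∈ Set.Icc (0 : ℝ) h) :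
    ε ≤ auxDenC d N t pos xv α h ε μ σ n := by
  unfold auxDenC
  refine le_add_of_nonneg_left (Finset.sum_nonneg fun u hu => ?_)
  obtain ⟨hut, huN⟩ := Finset.mem_erase.mp hu
  apply mul_nonneg (gaussWeight_pos μ hσ _).le
  exact polyEnvelope_nonneg n hn (div_nonneg (hpos u huN hut).1 hh.le)
    ((div_le_one hh).mpr (hpos u huN hut).2)

end auxLemmas

section auxLemmas2

variable (d : ℕ) (N : Finset ι) (t : ι) (pos : ι → EuclideanSpace ℝ (Fin d))
  (xv : EuclideanSpace ℝ (Fin d)) (α h ε μ σ : ℝ) (n : ℕ)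

set_option maxHeartbeats 1000000 in
lemma erased_dynCutoff_const (xt : EuclideanSpace ℝ (Fin d)) :
    dynCutoff d (N.erase t) t pos xv α h ε μ σ n xt =
      auxNumC d N t pos xv α h ε μ σ n / auxDenC d N t pos xv α h ε μ σ n := by
  have hsr : ∀ u ∈ N.erase t, softRank d (N.erase t) t pos xv α h n xt u =
      auxA d N t pos xv α h n u := by
    intro u hu
    obtain ⟨hut, _⟩ := Finset.mem_erase.mp hu
    unfold softRank auxA
    rw [Finset.erase_right_comm]
    refine Finset.sum_congr rfl fun s' hs' => ?_
    have hs't : s' ≠ t := (Finset.mem_erase.mp hs').1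
    unfold nbrDist
    rw [if_neg hut, if_neg hs't]
  have h1 : ∀ u ∈ N.erase t,
      gaussWeight μ σ (softRank d (N.erase t) t pos xv α h n xt u) *
        polyEnvelope n (nbrDist d t pos xv xt u / h) * nbrDist d t pos xv xt u =
      gaussWeight μ σ (auxA d N t pos xv α h n u) *
        polyEnvelope n (‖pos u - xv‖ / h) * ‖pos u - xv‖ := by
    intro u hu
    obtain ⟨hut, _⟩ := Finset.mem_erase.mp hu
    rw [hsr u hu]
    unfold nbrDist
    rw [if_neg hut]
  have h2 : ∀ u ∈ N.erase t,
      gaussWeight μ σ (softRank d (N.erase t) t pos xv α h n xt u) *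
        polyEnvelope n (nbrDist d t pos xv xt u / h) =
      gaussWeight μ σ (auxA d N t pos xv α h n u) *
        polyEnvelope n (‖pos u - xv‖ / h) := by
    intro u hu
    obtain ⟨hut, _⟩ := Finset.mem_erase.mp hu
    rw [hsr u hu]
    unfold nbrDist
    rw [if_neg hut]
  unfold dynCutoff auxNumC auxDenC
  rw [Finset.sum_congr rfl h1, Finset.sum_congr rfl h2]

end auxLemmas2

section mainFlat

variable (d : ℕ) (N : Finset ι) (t : ι) (pos : ι → EuclideanSpace ℝ (Fin d))
  (xv : EuclideanSpace ℝ (Fin d)) (α h ε μ σ : ℝ) (n : ℕ)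

lemma flat2_auxPhi (ht : t ∈ N) (hn : 3 ≤ n) (hh : 0 < h) (hε : 0 < ε) (hσ : 0 < σ)
    (hpos : ∀ u ∈ N, u ≠ t → ‖pos u - xv‖ ∈ Set.Icc (0 : ℝ) h) :
    Flat2 (auxPhi d N t pos xv α h ε μ σ n) h
      (auxNumC d N t pos xv α h ε μ σ n / auxDenC d N t pos xv α h ε μ σ n) := by
  have hq := flat2_polyEnvelope_div hn hh
  have hSReq : ∀ u, u ≠ t → (fun s => auxSR d N t pos xv α h n s u) =
      (fun s => auxA d N t pos xv α h n u +
        _root_.sigmoid (α * (‖pos u - xv‖ - s)) * polyEnvelope n (s / h)) := by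
    intro u hut
    funext s
    unfold auxSR auxA
    have htm : t ∈ N.erase u := Finset.mem_erase.mpr ⟨Ne.symm hut, ht⟩
    rw [← Finset.sum_erase_add (N.erase u) _ htm]
    congr 1
    · refine Finset.sum_congr rfl fun s' hs' => ?_
      have hs1 : s' ≠ t := (Finset.mem_erase.mp hs').1
      unfold auxNd
      rw [if_neg hut, if_neg hs1]
    · unfold auxNd
      rw [if_neg hut, if_pos rfl]
  have huterm : ∀ u ∈ N.erase t,
      Flat2 (fun s => gaussWeight μ σ (auxSR d N t pos xv α h n s u) *
        polyEnvelope n (auxNd d t pos xv s u / h) * auxNd d t pos xv s u) h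
        (gaussWeight μ σ (auxA d N t pos xv α h n u) *
          polyEnvelope n (‖pos u - xv‖ / h) * ‖pos u - xv‖) := by
    intro u hu
    obtain ⟨hut, huN⟩ := Finset.mem_erase.mp hu
    have hSR : Flat2 (fun s => auxSR d N t pos xv α h n s u) h
        (auxA d N t pos xv α h n u) := by
      rw [hSReq u hut]
      have h2 : Flat2 (fun s => _root_.sigmoid (α * (‖pos u - xv‖ - s)) *
          polyEnvelope n (s / h)) h 0 :=
        ContDiff.mul_flat (sigmoid_contDiff.comp (by fun_prop)) hq
      simpa using (Flat2.const h (auxA d N t pos xv α h n u)).add h2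
    have hg : Flat2 (fun s => gaussWeight μ σ (auxSR d N t pos xv α h n s u)) h
        (gaussWeight μ σ (auxA d N t pos xv α h n u)) :=
      Flat2.comp isOpen_univ ((gaussWeight_contDiff μ σ).contDiffOn) (Set.mem_univ _) hSR
    have hout := (hg.mul (Flat2.const h (polyEnvelope n (‖pos u - xv‖ / h)))).mul
      (Flat2.const h ‖pos u - xv‖)
    have heq : (fun s => gaussWeight μ σ (auxSR d N t pos xv α h n s u) *
        polyEnvelope n (auxNd d t pos xv s u / h) * auxNd d t pos xv s u)
        = (fun s => gaussWeight μ σ (auxSR d N t pos xv α h n s u) *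
          polyEnvelope n (‖pos u - xv‖ / h) * ‖pos u - xv‖) := by
      funext s; unfold auxNd; rw [if_neg hut]
    rw [heq]; exact hout
  have htterm : Flat2 (fun s => gaussWeight μ σ (auxSR d N t pos xv α h n s t) *
      polyEnvelope n (auxNd d t pos xv s t / h) * auxNd d t pos xv s t) h 0 := by
    have hsm : ContDiff ℝ (⊤:ℕ∞)
        (fun s => gaussWeight μ σ (auxSR d N t pos xv α h n s t) * s) :=
      ((gaussWeight_contDiff μ σ).comp (auxSR_contDiff d N t pos xv α h n t)).mul contDiff_id
    have h0 := hsm.mul_flat hq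
    have heq : (fun s => gaussWeight μ σ (auxSR d N t pos xv α h n s t) *
        polyEnvelope n (auxNd d t pos xv s t / h) * auxNd d t pos xv s t)
        = (fun s => (gaussWeight μ σ (auxSR d N t pos xv α h n s t) * s) *
          polyEnvelope n (s / h)) := by
      funext s; unfold auxNd; rw [if_pos rfl]; ring
    rw [heq]; exact h0
  have hNum : Flat2 (auxNum d N t pos xv α h ε μ σ n) h
      (auxNumC d N t pos xv α h ε μ σ n) := by
    have hsum := ((Flat2.sum huterm).add htterm).add (Flat2.const h (h * ε))
    have heq : auxNum d N t pos xv α h ε μ σ n = fun s =>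
        ((∑ u ∈ N.erase t, gaussWeight μ σ (auxSR d N t pos xv α h n s u) *
            polyEnvelope n (auxNd d t pos xv s u / h) * auxNd d t pos xv s u) +
          gaussWeight μ σ (auxSR d N t pos xv α h n s t) *
            polyEnvelope n (auxNd d t pos xv s t / h) * auxNd d t pos xv s t) + h * ε := by
      funext s
      unfold auxNum
      rw [Finset.sum_erase_add N _ ht]
    have hval : auxNumC d N t pos xv α h ε μ σ n =
        ((∑ u ∈ N.erase t, gaussWeight μ σ (auxA d N t pos xv α h n u) *
          polyEnvelope n (‖pos u - xv‖ / h) * ‖pos u - xv‖) + 0) + h * ε := by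
      unfold auxNumC; ring
    rw [heq, hval]
    exact hsum
  have hDen : Flat2 (auxDen d N t pos xv α h ε μ σ n) h
      (auxDenC d N t pos xv α h ε μ σ n) := by
    have hut2 : ∀ u ∈ N.erase t,
        Flat2 (fun s => gaussWeight μ σ (auxSR d N t pos xv α h n s u) *
          polyEnvelope n (auxNd d t pos xv s u / h)) h
          (gaussWeight μ σ (auxA d N t pos xv α h n u) *
            polyEnvelope n (‖pos u - xv‖ / h)) := by
      intro u hu
      obtain ⟨hut, huN⟩ := Finset.mem_erase.mp hu
      have hSR : Flat2 (fun s => auxSR d N t pos xv α h n s u) h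
          (auxA d N t pos xv α h n u) := by
        rw [hSReq u hut]
        have h2 : Flat2 (fun s => _root_.sigmoid (α * (‖pos u - xv‖ - s)) *
            polyEnvelope n (s / h)) h 0 :=
          ContDiff.mul_flat (sigmoid_contDiff.comp (by fun_prop)) hq
        simpa using (Flat2.const h (auxA d N t pos xv α h n u)).add h2
      have hg : Flat2 (fun s => gaussWeight μ σ (auxSR d N t pos xv α h n s u)) h
          (gaussWeight μ σ (auxA d N t pos xv α h n u)) :=
        Flat2.comp isOpen_univ ((gaussWeight_contDiff μ σ).contDiffOn) (Set.mem_univ _) hSR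
      have hout := hg.mul (Flat2.const h (polyEnvelope n (‖pos u - xv‖ / h)))
      have heq : (fun s => gaussWeight μ σ (auxSR d N t pos xv α h n s u) *
          polyEnvelope n (auxNd d t pos xv s u / h))
          = (fun s => gaussWeight μ σ (auxSR d N t pos xv α h n s u) *
            polyEnvelope n (‖pos u - xv‖ / h)) := by
        funext s; unfold auxNd; rw [if_neg hut]
      rw [heq]; exact hout
    have htt2 : Flat2 (fun s => gaussWeight μ σ (auxSR d N t pos xv α h n s t) *
        polyEnvelope n (auxNd d t pos xv s t / h)) h 0 := by
      have hsm : ContDiff ℝ (⊤:ℕ∞)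
          (fun s => gaussWeight μ σ (auxSR d N t pos xv α h n s t)) :=
        (gaussWeight_contDiff μ σ).comp (auxSR_contDiff d N t pos xv α h n t)
      have h0 := hsm.mul_flat hq
      have heq : (fun s => gaussWeight μ σ (auxSR d N t pos xv α h n s t) *
          polyEnvelope n (auxNd d t pos xv s t / h))
          = (fun s => gaussWeight μ σ (auxSR d N t pos xv α h n s t) *
            polyEnvelope n (s / h)) := by
        funext s; unfold auxNd; rw [if_pos rfl]
      rw [heq]; exact h0
    have hsum := ((Flat2.sum hut2).add htt2).add (Flat2.const h ε)
    have heq : auxDen d N t pos xv α h ε μ σ n = fun s =>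
        ((∑ u ∈ N.erase t, gaussWeight μ σ (auxSR d N t pos xv α h n s u) *
            polyEnvelope n (auxNd d t pos xv s u / h)) +
          gaussWeight μ σ (auxSR d N t pos xv α h n s t) *
            polyEnvelope n (auxNd d t pos xv s t / h)) + ε := by
      funext s
      unfold auxDen
      rw [Finset.sum_erase_add N _ ht]
    have hval : auxDenC d N t pos xv α h ε μ σ n =
        ((∑ u ∈ N.erase t, gaussWeight μ σ (auxA d N t pos xv α h n u) *
          polyEnvelope n (‖pos u - xv‖ / h)) + 0) + ε := by
      unfold auxDenC; ring
    rw [heq, hval]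
    exact hsum
  have hden0 : auxDenC d N t pos xv α h ε μ σ n ≠ 0 :=
    (lt_of_lt_of_le hε (auxDenC_ge d N t pos xv α h ε μ σ n hn hh hσ hε hpos)).ne'
  exact hNum.div hDen hden0

end mainFlat

theorem dynCutoff_hessian_vanishes_and_C2_extension (d : ℕ) (N : Finset ι) (t : ι) (ht : t ∈ N)
    (pos : ι → EuclideanSpace ℝ (Fin d)) (xv : EuclideanSpace ℝ (Fin d))
    (α h ε μ σ : ℝ) (n : ℕ) (hn : 3 ≤ n) (hα : 0 < α) (hh : 0 < h) (hε : 0 < ε) (hσ : 0 < σ)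
    (hpos : ∀ u ∈ N, u ≠ t → ‖pos u - xv‖ ∈ Set.Icc (0 : ℝ) h)
    (xt₀ : EuclideanSpace ℝ (Fin d)) (hxt : xt₀ ≠ xv) (hrt : ‖xt₀ - xv‖ = h) :
    fderiv ℝ (fderiv ℝ (dynCutoff d N t pos xv α h ε μ σ n)) xt₀ = 0 ∧
      ContDiffOn ℝ 2
        (fun xt => if ‖xt - xv‖ ≤ h then dynCutoff d N t pos xv α h ε μ σ n xt
          else dynCutoff d (N.erase t) t pos xv α h ε μ σ n xt)
        {x : EuclideanSpace ℝ (Fin d) | x ≠ xv} := by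
  have hφ := flat2_auxPhi d N t pos xv α h ε μ σ n ht hn hh hε hσ hpos
  have hr : ∀ x : EuclideanSpace ℝ (Fin d), x ≠ xv →
      ContDiffAt ℝ (⊤:ℕ∞) (fun y : EuclideanSpace ℝ (Fin d) => ‖y - xv‖) x := by
    intro x hx
    have h1 : ContDiffAt ℝ (⊤:ℕ∞) (norm : EuclideanSpace ℝ (Fin d) → ℝ) (x - xv) :=
      contDiffAt_norm ℝ (sub_ne_zero.mpr hx)
    have h2 : ContDiffAt ℝ (⊤:ℕ∞) (fun y : EuclideanSpace ℝ (Fin d) => y - xv) x :=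
      contDiffAt_id.sub contDiffAt_const
    exact h1.comp x h2
  constructor
  · obtain ⟨φ₁, φ₂, ⟨h1, h2, h3⟩, hva, h10, h20⟩ := hφ
    set r := fun x : EuclideanSpace ℝ (Fin d) => ‖x - xv‖ with hrdef
    have hrxt : r xt₀ = h := hrt
    have hrc : ContinuousAt r xt₀ := (hr xt₀ hxt).continuousAt
    have hrt0 : Filter.Tendsto r (nhds xt₀) (nhds h) := by
      rw [← hrxt]; exact hrc
    have hevne : ∀ᶠ x in nhds xt₀, x ∈ ({xv}ᶜ : Set (EuclideanSpace ℝ (Fin d))) :=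
      isOpen_compl_singleton.eventually_mem hxt
    have hfuneq : dynCutoff d N t pos xv α h ε μ σ n =
        fun x => auxPhi d N t pos xv α h ε μ σ n (r x) :=
      funext fun x => dynCutoff_eq_aux d N t pos xv α h ε μ σ n x
    have hev : ∀ᶠ x in nhds xt₀, HasFDerivAt (dynCutoff d N t pos xv α h ε μ σ n)
        (φ₁ (r x) • fderiv ℝ r x) x := by
      filter_upwards [hrt0.eventually h1, hevne] with x hP hne
      have hdr : HasFDerivAt r (fderiv ℝ r x) x :=
        ((hr x (by simpa using hne)).differentiableAt (by simp)).hasFDerivAt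
      have hcomp := hP.comp_hasFDerivAt x hdr
      rw [hfuneq]
      exact hcomp
    have hfd : (fun x => fderiv ℝ (dynCutoff d N t pos xv α h ε μ σ n) x) =ᶠ[nhds xt₀]
        (fun x => φ₁ (r x) • fderiv ℝ r x) := hev.mono fun x hx => hx.fderiv
    rw [hfd.fderiv_eq]
    have hdr0 : HasFDerivAt r (fderiv ℝ r xt₀) xt₀ :=
      ((hr xt₀ hxt).differentiableAt (by simp)).hasFDerivAt
    have hc : HasFDerivAt (fun x => φ₁ (r x))
        (0 : EuclideanSpace ℝ (Fin d) →L[ℝ] ℝ) xt₀ := by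
      have hφ1d : HasDerivAt φ₁ (φ₂ (r xt₀)) (r xt₀) := by
        rw [hrxt]; exact h2.self_of_nhds
      have hcomp := hφ1d.comp_hasFDerivAt xt₀ hdr0
      have hz : φ₂ (r xt₀) = 0 := by rw [hrxt]; exact h20
      rw [hz, zero_smul] at hcomp
      exact hcomp
    have hR : HasFDerivAt (fun x => fderiv ℝ r x) (fderiv ℝ (fderiv ℝ r) xt₀) xt₀ := by
      have hfd2 : ContDiffAt ℝ 1 (fderiv ℝ r) xt₀ :=
        (hr xt₀ hxt).fderiv_right (m := 1) (by norm_cast)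
      exact (hfd2.differentiableAt (by norm_num)).hasFDerivAt
    have hsm := hc.smul hR
    rw [show fderiv ℝ (fun x => φ₁ (r x) • fderiv ℝ r x) xt₀ = _ from hsm.fderiv]
    have hz1 : φ₁ (r xt₀) = 0 := by rw [hrxt]; exact h10
    rw [hz1]
    ext y
    simp
  · intro x hx
    have hx' : x ≠ xv := hx
    have hfun : (fun xt => if ‖xt - xv‖ ≤ h then dynCutoff d N t pos xv α h ε μ σ n xt
        else dynCutoff d (N.erase t) t pos xv α h ε μ σ n xt) =
        fun xt => (fun y => if y ≤ h then auxPhi d N t pos xv α h ε μ σ n y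
          else auxNumC d N t pos xv α h ε μ σ n / auxDenC d N t pos xv α h ε μ σ n)
          ‖xt - xv‖ := by
      funext z
      by_cases hle : ‖z - xv‖ ≤ h
      · simp only [if_pos hle]
        exact dynCutoff_eq_aux d N t pos xv α h ε μ σ n z
      · simp only [if_neg hle]
        exact erased_dynCutoff_const d N t pos xv α h ε μ σ n z
    rw [hfun]
    apply ContDiffAt.contDiffWithinAt
    have hrx : ContDiffAt ℝ 2 (fun y : EuclideanSpace ℝ (Fin d) => ‖y - xv‖) x :=
      (hr x hx').of_le (by norm_cast)
    have hglue : ContDiffAt ℝ 2 (fun y : ℝ => if y ≤ h then auxPhi d N t pos xv α h ε μ σ n y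
        else auxNumC d N t pos xv α h ε μ σ n / auxDenC d N t pos xv α h ε μ σ n) ‖x - xv‖ := by
      apply glue_contDiffAt hφ
      intro hlt
      have h0 : (0:ℝ) ≤ ‖x - xv‖ := norm_nonneg _
      have hden : auxDen d N t pos xv α h ε μ σ n ‖x - xv‖ ≠ 0 :=
        (lt_of_lt_of_le hε
          (auxDen_ge d N t pos xv α h ε μ σ n hn hh hσ hε hpos h0 hlt.le)).ne'
      have hq := ((auxNum_contDiff d N t pos xv α h ε μ σ n).contDiffAt.div
        (auxDen_contDiff d N t pos xv α h ε μ σ n).contDiffAt hden)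
      exact hq.of_le (by norm_cast)
    exact hglue.comp x hrx
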